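/- Let φ be a submeasure on B, let I ⊆ ℕ* be finite, and let X ⊆ T be (I,φ)-thin. Let m_0 < n_0 be positive integers, set I' = I ∩ {m_0+1, ..., n_0}, and let A ∈ A_{m_0}. Then the set X' = (π_A^{-1}(X))_{n_0} is (I',φ)-thin. -/
import Mathlib


open Filter Topology

namespace Maharam

/-- The space `T = ∏_{n ≥ 1} {1, …, 2^n}`; the factor of rank `n` is encoded
as `Fin (2 ^ n)`. -/
abbrev T : Type := ∀ n : ℕ+, Fin (2 ^ (n : ℕ))

/-- `X` belongs to the algebra `B_n` generated by the coordinates of rank `≤ n`,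
i.e. `X` depends only on the coordinates of rank `≤ n`. -/
def MemBn (n : ℕ) (X : Set T) : Prop :=
  ∀ z z' : T, (∀ i : ℕ+, (i : ℕ) ≤ n → z i = z' i) → z ∈ X → z' ∈ X

/-- The algebra `B = ⋃_n B_n` of clopen subsets of `T`. -/
def MemB (X : Set T) : Prop := ∃ n : ℕ, MemBn n X

/-- The atom of rank `m` whose first `m` coordinates are prescribed by `τ`. -/
def atom (m : ℕ) (τ : ∀ i : ℕ+, Fin (2 ^ (i : ℕ))) : Set T :=
  {z | ∀ i : ℕ+, (i : ℕ) ≤ m → z i = τ i}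

/-- `A` is an atom of the algebra `B_m`. -/
def IsAtomOfRank (m : ℕ) (A : Set T) : Prop :=
  ∃ τ : ∀ i : ℕ+, Fin (2 ^ (i : ℕ)), A = atom m τ

/-- `S_{n,τ} = {z ∈ T : z_n ≠ τ}`. -/
def Sset (n : ℕ+) (τ : Fin (2 ^ (n : ℕ))) : Set T := {z | z n ≠ τ}

/-- `ν` is a submeasure on the algebra of sets `𝒜`. -/
def IsSubmeasureOn (𝒜 : Set T → Prop) (ν : Set T → ℝ) : Prop :=
  ν ∅ = 0 ∧ (∀ A, 𝒜 A → 0 ≤ ν A) ∧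
    (∀ A B, 𝒜 A → 𝒜 B → A ⊆ B → ν A ≤ ν B) ∧
    (∀ A B, 𝒜 A → 𝒜 B → ν (A ∪ B) ≤ ν A + ν B)

/-- `μ` is a finitely additive measure on the algebra of sets `𝒜`. -/
def IsMeasureOn (𝒜 : Set T → Prop) (μ : Set T → ℝ) : Prop :=
  IsSubmeasureOn 𝒜 μ ∧ ∀ A B, 𝒜 A → 𝒜 B → A ∩ B = ∅ → μ (A ∪ B) = μ A + μ B

/-- `ν` is exhaustive: `ν (E n) → 0` along every disjoint sequence of `𝒜`. -/
def ExhaustiveOn (𝒜 : Set T → Prop) (ν : Set T → ℝ) : Prop :=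
  ∀ E : ℕ → Set T, (∀ n, 𝒜 (E n)) → (∀ i j, i ≠ j → E i ∩ E j = ∅) →
    Tendsto (fun n => ν (E n)) atTop (𝓝 0)

/-- `ν` is uniformly exhaustive. -/
def UniformlyExhaustiveOn (𝒜 : Set T → Prop) (ν : Set T → ℝ) : Prop :=
  ∀ ε : ℝ, 0 < ε → ∃ n : ℕ, 0 < n ∧
    ∀ E : Fin n → Set T, (∀ i, 𝒜 (E i)) → (∀ i j, i ≠ j → E i ∩ E j = ∅) →
      ∃ i, ν (E i) ≤ ε

/-- `ν` is `ε`-exhaustive: `limsup_n ν (E n) ≤ ε` for every disjoint sequence of `𝒜`. -/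
def EpsExhaustiveOn (𝒜 : Set T → Prop) (ν : Set T → ℝ) (ε : ℝ) : Prop :=
  ∀ E : ℕ → Set T, (∀ n, 𝒜 (E n)) → (∀ i j, i ≠ j → E i ∩ E j = ∅) →
    ∀ δ : ℝ, 0 < δ → ∃ N : ℕ, ∀ n ≥ N, ν (E n) ≤ ε + δ

/-- `ν₁` is absolutely continuous with respect to `ν₂` on `𝒜`. -/
def AbsContOn (𝒜 : Set T → Prop) (ν₁ ν₂ : Set T → ℝ) : Prop :=
  ∀ ε : ℝ, 0 < ε → ∃ α : ℝ, 0 < α ∧ ∀ A, 𝒜 A → ν₂ A ≤ α → ν₁ A ≤ ε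

/-- `(X)_n`: the smallest `B_n`-measurable set containing `X` (the union of the
atoms of rank `n` meeting `X`). -/
def projSet (n : ℕ) (X : Set T) : Set T :=
  {z | ∃ z' ∈ X, ∀ i : ℕ+, (i : ℕ) ≤ n → z i = z' i}

/-- The map `π_A : T → A` for the atom `A` of rank `m` prescribed by `τ`:
it replaces the first `m` coordinates of `z` by those of `τ`. -/
def piA (m : ℕ) (τ : ∀ i : ℕ+, Fin (2 ^ (i : ℕ))) (z : T) : T :=
  fun i => if (i : ℕ) ≤ m then τ i else z i

/-- `X` is `(m,n,φ)`-thin: for every atom `A` of rank `m` (prescribed by `τ`)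
there is `C ∈ B_n`, `C ⊆ A`, `C ∩ X = ∅`, with `φ(π_A⁻¹(C)) ≥ 1`. -/
def MNPhiThin (φ : Set T → ℝ) (m n : ℕ) (X : Set T) : Prop :=
  ∀ τ : ∀ i : ℕ+, Fin (2 ^ (i : ℕ)),
    ∃ C : Set T, MemBn n C ∧ C ⊆ atom m τ ∧ C ∩ X = ∅ ∧ 1 ≤ φ (piA m τ ⁻¹' C)

/-- `X` is `(I,φ)`-thin: `(m,n,φ)`-thin for all `m < n` in `I`. -/
def IPhiThin (φ : Set T → ℝ) (I : Finset ℕ+) (X : Set T) : Prop :=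
  ∀ m ∈ I, ∀ n ∈ I, (m : ℕ) < (n : ℕ) → MNPhiThin φ (m : ℕ) (n : ℕ) X

/-- If `X` is `(I,φ)`-thin for a submeasure `φ` on `B`, `m₀ < n₀`,
`I' = I ∩ ]m₀, n₀]`, and `A` is the atom of rank `m₀` prescribed by `τ`, then
`X' = (π_A⁻¹(X))_{n₀}` is `(I',φ)`-thin. -/
theorem thin_transfer (φ : Set T → ℝ) (hφ : IsSubmeasureOn MemB φ)
    (I : Finset ℕ+) (X : Set T) (hX : IPhiThin φ I X)
    (m₀ n₀ : ℕ) (hm₀ : 0 < m₀) (hmn : m₀ < n₀)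
    (τ : ∀ i : ℕ+, Fin (2 ^ (i : ℕ))) :
    IPhiThin φ (I.filter fun i => m₀ < (i : ℕ) ∧ (i : ℕ) ≤ n₀)
      (projSet n₀ (piA m₀ τ ⁻¹' X)) := by
  intro m hm n hn hlt
  simp only [Finset.mem_filter] at hm hn
  obtain ⟨hmI, hm0, hmn0⟩ := hm
  obtain ⟨hnI, hn0, hnn0⟩ := hn
  intro σ
  set σ' : ∀ i : ℕ+, Fin (2 ^ (i : ℕ)) := fun i => if (i : ℕ) ≤ m₀ then τ i else σ i with hσ'
  obtain ⟨C, hCBn, hCsub, hCX, hCφ⟩ := hX m hmI n hnI hlt σ'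
  refine ⟨(piA m₀ τ ⁻¹' C) ∩ atom (m : ℕ) σ, ?_, Set.inter_subset_right, ?_, ?_⟩
  · intro z z' hz hzmem
    refine ⟨?_, ?_⟩
    · apply hCBn (piA m₀ τ z) (piA m₀ τ z') _ hzmem.1
      intro i hi
      unfold piA
      by_cases h : (i : ℕ) ≤ m₀
      · simp [h]
      · simpa [h] using hz i hi
    · intro i hi
      rw [← hz i (hi.trans hlt.le)]
      exact hzmem.2 i hi
  · ext z
    simp only [Set.mem_inter_iff, Set.mem_empty_iff_false, iff_false]
    rintro ⟨⟨hzC, hzatom⟩, hzX'⟩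
    obtain ⟨z', hz'X, hzz'⟩ := hzX'
    apply Set.eq_empty_iff_forall_notMem.mp hCX (piA m₀ τ z')
    refine ⟨?_, hz'X⟩
    apply hCBn (piA m₀ τ z) (piA m₀ τ z') _ hzC
    intro i hi
    unfold piA
    by_cases h : (i : ℕ) ≤ m₀
    · simp [h]
    · simpa [h] using hzz' i (hi.trans hnn0)
  · have key : piA (m : ℕ) σ ⁻¹' ((piA m₀ τ ⁻¹' C) ∩ atom (m : ℕ) σ)
        = piA (m : ℕ) σ' ⁻¹' C := by
      ext z
      simp only [Set.mem_preimage, Set.mem_inter_iff]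
      have h1 : piA m₀ τ (piA (m : ℕ) σ z) = piA (m : ℕ) σ' z := by
        funext i
        unfold piA
        by_cases h : (i : ℕ) ≤ m₀
        · simp [h, hσ', h.trans hm0.le]
        · by_cases h2 : (i : ℕ) ≤ (m : ℕ) <;> simp [h, h2, hσ']
      have h2 : piA (m : ℕ) σ z ∈ atom (m : ℕ) σ := by
        intro i hi
        unfold piA
        simp [hi]
      simp [h1, h2]
    rw [key]
    exact hCφ

end Maharam
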